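/- Under the same setup (0 < μ < 1, μ = (ᾱ⁽¹⁾−ᾱ⁽²⁾+2Δ)/(1−ᾱ⁽¹⁾−Δ), ε₁ = (2−ᾱ⁽¹⁾−ᾱ⁽²⁾)/(1−ᾱ⁽¹⁾−Δ)), the limit as S → ∞ of d₂ = ᾱ⁽¹⁾ + 2Δ + [T₁(2−2ᾱ⁽¹⁾−2Δ) + T_S(ᾱ⁽²⁾−ᾱ⁽¹⁾−2Δ)] / (Σ_{i=1}^S T_i) equals (2+2ᾱ⁽²⁾−ᾱ⁽¹⁾)/3. -/

import Mathlib

open Filter Finset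

theorem stmt_11 (T1 e1 e2 Δ a1 a2 μ : ℝ)
    (hT1 : 0 < T1) (he1 : 0 < e1) (he2 : 0 < e2) (hΔ : 0 < Δ)
    (ha2 : 0 ≤ a2) (ha21 : a2 ≤ a1) (ha1 : a1 ≤ 1)
    (hμ0 : 0 < μ) (hμ1 : μ < 1)
    (hμ : μ = (a1 - a2 + 2 * Δ) / (1 - a1 - Δ))
    (he1def : e1 = (2 - a1 - a2) / (1 - a1 - Δ))
    (he2def : e2 = (a1 - a2 + 2 * Δ) / (1 - a2)) :
    Tendsto (fun S : ℕ =>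
        a1 + 2 * Δ +
          (T1 * (2 - 2 * a1 - 2 * Δ) + (T1 * e1 * μ ^ (S - 3) * e2) * (a2 - a1 - 2 * Δ)) /
            (T1 + (∑ i ∈ Finset.Icc 2 (S - 1), T1 * e1 * μ ^ (i - 2)) +
              T1 * e1 * μ ^ (S - 3) * e2))
      atTop (nhds ((2 + 2 * a2 - a1) / 3)) := by
  have hN : 0 < a1 - a2 + 2 * Δ := by linarith
  have hD : 0 < 1 - a1 - Δ := by
    rcases lt_trichotomy (1 - a1 - Δ) 0 with h | h | h
    · exact absurd (hμ ▸ hμ0) (not_lt.2 (div_nonpos_of_nonneg_of_nonpos hN.le h.le))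
    · exact absurd hμ0 (by simp [hμ, h])
    · exact h
  have hμD : μ * (1 - a1 - Δ) = a1 - a2 + 2 * Δ := by
    rw [hμ]; field_simp
  have h1μ : 0 < 1 - μ := by linarith
  have hDN : 0 < 1 - 2 * a1 + a2 - 3 * Δ := by nlinarith [hμD]
  set F : ℝ → ℝ := fun t => a1 + 2 * Δ +
      (T1 * (2 - 2 * a1 - 2 * Δ) + (T1 * e1 * t * e2) * (a2 - a1 - 2 * Δ)) /
        (T1 + T1 * e1 * ((1 - μ * t) / (1 - μ)) + T1 * e1 * t * e2) with hFdef
  have hden0 : T1 + T1 * e1 * ((1 - μ * 0) / (1 - μ)) + T1 * e1 * 0 * e2 ≠ 0 := by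
    have h : 0 < T1 * e1 * ((1 - μ * 0) / (1 - μ)) := by
      simp only [mul_zero, sub_zero]; positivity
    nlinarith
  have hFcont : ContinuousAt F 0 := by
    apply ContinuousAt.add continuousAt_const
    exact ContinuousAt.div (by fun_prop) (by fun_prop) hden0
  have h1μ' : 1 - μ = (1 - 2 * a1 + a2 - 3 * Δ) / (1 - a1 - Δ) := by
    rw [hμ]; field_simp; ring
  have hF0 : F 0 = (2 + 2 * a2 - a1) / 3 := by
    have hden : T1 + T1 * e1 * ((1 - μ * 0) / (1 - μ)) + T1 * e1 * 0 * e2 =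
        T1 * (3 * (1 - a1 - Δ)) / (1 - 2 * a1 + a2 - 3 * Δ) := by
      rw [he1def, h1μ']
      field_simp [hDN.ne', hD.ne', (by linarith : (0:ℝ) < 1 - 2 * a1 + a2 - Δ * 3).ne']
      ring
    simp only [hFdef]
    rw [hden]
    rw [mul_zero, zero_mul, zero_mul, add_zero]
    rw [div_div_eq_mul_div]
    field_simp
    ring
  have hu : Tendsto (fun S : ℕ => μ ^ (S - 3)) atTop (nhds 0) :=
    (tendsto_pow_atTop_nhds_zero_of_lt_one hμ0.le hμ1).comp (tendsto_sub_atTop_nat 3)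
  have hcomp : Tendsto (fun S : ℕ => F (μ ^ (S - 3))) atTop (nhds ((2 + 2 * a2 - a1) / 3)) := by
    rw [← hF0]
    exact (hFcont.tendsto).comp hu
  refine hcomp.congr' ?_
  filter_upwards [eventually_ge_atTop 3] with S hS
  have hsum : (∑ i ∈ Finset.Icc 2 (S - 1), T1 * e1 * μ ^ (i - 2)) =
      T1 * e1 * ((1 - μ * μ ^ (S - 3)) / (1 - μ)) := by
    rw [← Finset.mul_sum]
    congr 1
    have hIcc : Finset.Icc 2 (S - 1) = Finset.Ico 2 S := by
      rw [← Finset.Ico_add_one_right_eq_Icc]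
      congr 1
      omega
    rw [hIcc, Finset.sum_Ico_eq_sum_range]
    have h2 : ∀ i ∈ Finset.range (S - 2), μ ^ (2 + i - 2) = μ ^ i := by
      intro i _; congr 1; omega
    rw [Finset.sum_congr rfl h2, geom_sum_eq hμ1.ne]
    have h3 : μ ^ (S - 2) = μ * μ ^ (S - 3) := by
      rw [← pow_succ']; congr 1; omega
    rw [h3, div_eq_div_iff (by linarith) (by linarith)]
    ring
  simp only [hFdef, hsum]
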